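/- (Lemma 2.1) Let E be a field and L/E a finite separable extension such that L = L1 L2 (compositum inside L) for intermediate fields L1 and L2 of L/E whose degrees [L1 : E] and [L2 : E] are relatively prime. Then N(L/E) = N(L1/E) ∩ N(L2/E), N(L1/E) = E* ∩ N(L/L2), and there is a group isomorphism E*/N(L/E) ≅ (E*/N(L1/E)) × (E*/N(L2/E)). -/

import Mathlib

/-!
Common definitions: strictly (primarily) quasilocal fields, norm groups, class fields,
Henselian discrete valuations, residue fields and ramification data.
-/

noncomputable section

open scoped TensorProduct

/-- The value monoid of a discrete (rank one, value group `ℤ`) valuation. -/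
abbrev Zm0 : Type := WithZero (Multiplicative ℤ)

/-- A finite-dimensional central division algebra over `E`, bundled together with its
Schur index `ind` (the positive integer whose square is the dimension). -/
structure CentralDivisionAlgebra (E : Type) [Field E] where
  D : Type
  [instDivisionRing : DivisionRing D]
  [instAlgebra : Algebra E D]
  finiteDimensional : FiniteDimensional E D
  central : Subalgebra.center E D = ⊥
  ind : ℕ
  ind_sq : ind * ind = Module.finrank E D

attribute [instance] CentralDivisionAlgebra.instDivisionRing CentralDivisionAlgebra.instAlgebra

/-- `E` is primarily quasilocal (PQL): every finite cyclic Galois extension `F` of `E` embeds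
as an `E`-subalgebra in every finite-dimensional central division `E`-algebra whose Schur index
is divisible by `[F : E]`. -/
def IsPQL (E : Type) [Field E] : Prop :=
  ∀ (F : Type) [Field F] [Algebra E F] [FiniteDimensional E F],
    IsGalois E F → IsCyclic (F ≃ₐ[E] F) →
      ∀ A : CentralDivisionAlgebra E, Module.finrank E F ∣ A.ind →
        Nonempty (F →ₐ[E] A.D)

/-- A Galois extension of `E` of degree `n`, bundled. -/
structure GaloisExtensionOfDegree (E : Type) [Field E] (n : ℕ) where
  F : Type
  [instField : Field F]
  [instAlgebra : Algebra E F]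
  galois : IsGalois E F
  deg : Module.finrank E F = n

/-- `P(E)`: the set of primes `p` such that `E` admits a Galois extension of degree `p`. -/
def primesP (E : Type) [Field E] : Set ℕ :=
  {p | p.Prime ∧ Nonempty (GaloisExtensionOfDegree E p)}

/-- The `p`-primary component of the Brauer group of `E` is nontrivial, expressed via the
existence of a central division `E`-algebra of Schur index divisible by `p`. -/
def BrauerPNontrivial (E : Type) [Field E] (p : ℕ) : Prop :=
  ∃ A : CentralDivisionAlgebra E, p ∣ A.ind ∧ A.ind ≠ 1

/-- `E` is strictly PQL: `E` is PQL and `Br(E)_p ≠ 0` for every `p ∈ P(E)`. -/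
def IsStrictlyPQL (E : Type) [Field E] : Prop :=
  IsPQL E ∧ ∀ p ∈ primesP E, BrauerPNontrivial E p

/-- `E` is quasilocal: every finite extension of `E` is PQL. -/
def IsQuasilocal (E : Type) [Field E] : Prop :=
  ∀ (L : Type) [Field L] [Algebra E L], FiniteDimensional E L → IsPQL L

/-- `E` is strictly quasilocal: every finite extension of `E` is strictly PQL. -/
def IsStrictlyQuasilocal (E : Type) [Field E] : Prop :=
  ∀ (L : Type) [Field L] [Algebra E L], FiniteDimensional E L → IsStrictlyPQL L

/-- The norm group `N(L/K)`, as a subgroup of `Kˣ`. -/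
def normGroup (K L : Type) [Field K] [Field L] [Algebra K L] : Subgroup Kˣ :=
  MonoidHom.range (Units.map (Algebra.norm K : L →* K))

/-- A fixed separable closure of `K` (inside a fixed algebraic closure). -/
abbrev SepClosure (K : Type) [Field K] : IntermediateField K (AlgebraicClosure K) :=
  separableClosure K (AlgebraicClosure K)

/-- `Nr(K)`: the set of norm groups of finite extensions of `K` inside `K_sep`. -/
def Nr (K : Type) [Field K] : Set (Subgroup Kˣ) :=
  {U | ∃ L : IntermediateField K ↥(SepClosure K), FiniteDimensional K ↥L ∧ normGroup K ↥L = U}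

/-- `L` is a class field of the subgroup `U ≤ Kˣ`: `N(L/K) = U` and `[Kˣ : U] = [L : K]`. -/
def IsClassField (K : Type) [Field K] (U : Subgroup Kˣ) (L : Type) [Field L] [Algebra K L] :
    Prop :=
  normGroup K L = U ∧ U.index = Module.finrank K L

/-- `L/K` is an abelian extension: Galois with commutative Galois group. -/
def IsAbelianExt (K L : Type) [Field K] [Field L] [Algebra K L] : Prop :=
  IsGalois K L ∧ ∀ a b : L ≃ₐ[K] L, a * b = b * a

/-- `R_ab`: the maximal abelian extension of `K` inside `R`. -/
def abelianPart (K R : Type) [Field K] [Field R] [Algebra K R] : IntermediateField K R :=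
  ⨆ (F : IntermediateField K R) (_ : IsAbelianExt K ↥F), F

/-- `R_{ab,p}`: the maximal abelian extension of `K` inside `R` of `p`-power degree. -/
def abelianPartP (E R : Type) [Field E] [Field R] [Algebra E R] (p : ℕ) :
    IntermediateField E R :=
  ⨆ (F : IntermediateField E R)
    (_ : IsAbelianExt E ↥F ∧ ∃ k : ℕ, Module.finrank E ↥F = p ^ k), F

/-- `P₀(E)`: primes `p` with `p = char E` or `E` contains a primitive `p`-th root of unity. -/
def P0Set (E : Type) [Field E] : Set ℕ :=
  {p | p.Prime ∧ (ringChar E = p ∨ ∃ x : E, IsPrimitiveRoot x p)}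

/-- `P₁(E)`: primes `p ∉ P₀(E)` with `E* ≠ E*^p`. -/
def P1Set (E : Type) [Field E] : Set ℕ :=
  {p | p.Prime ∧ p ∉ P0Set E ∧ ∃ a : Eˣ, ∀ b : Eˣ, b ^ p ≠ a}

/-- `P₂(E)`: the remaining primes. -/
def P2Set (E : Type) [Field E] : Set ℕ :=
  {p | p.Prime ∧ p ∉ P0Set E ∧ p ∉ P1Set E}

/-- The residue field of a valued field `(K, v)`. -/
abbrev ResField (K : Type) [Field K] (v : Valuation K Zm0) : Type :=
  IsLocalRing.ResidueField ↥v.valuationSubring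

variable {K R : Type} [Field K] [Field R] [Algebra K R]

/-- If `w` prolongs `v` (with ramification index `e`), the inclusion of valuation rings. -/
def valuationSubringHom (v : Valuation K Zm0) (w : Valuation R Zm0) (e : ℕ)
    (hcomp : ∀ x : K, w (algebraMap K R x) = v x ^ e) :
    ↥v.valuationSubring →+* ↥w.valuationSubring where
  toFun x := ⟨algebraMap K R x, by
    rw [Valuation.mem_valuationSubring_iff, hcomp]
    exact pow_le_one' ((v.mem_valuationSubring_iff _).mp x.2) e⟩
  map_one' := Subtype.ext (by simp)
  map_mul' x y := Subtype.ext (by simp)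
  map_zero' := Subtype.ext (by simp)
  map_add' x y := Subtype.ext (by simp)

theorem isLocalHom_valuationSubringHom (v : Valuation K Zm0) (w : Valuation R Zm0) (e : ℕ)
    (he : 0 < e) (hcomp : ∀ x : K, w (algebraMap K R x) = v x ^ e) :
    IsLocalHom (valuationSubringHom v w e hcomp) := by
  constructor
  intro a ha
  rcases ha with ⟨u, hu⟩
  have hmul : ((u : ↥w.valuationSubring) : R) * ((↑u⁻¹ : ↥w.valuationSubring) : R) = 1 := by
    norm_cast
    rw [mul_inv_cancel]
    rfl
  have hle1 : w ((u : ↥w.valuationSubring) : R) ≤ 1 := (u : ↥w.valuationSubring).2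
  have hle2 : w ((↑u⁻¹ : ↥w.valuationSubring) : R) ≤ 1 := (↑u⁻¹ : ↥w.valuationSubring).2
  have hprod : w ((u : ↥w.valuationSubring) : R) * w ((↑u⁻¹ : ↥w.valuationSubring) : R) = 1 := by
    rw [← map_mul, hmul, map_one]
  have h1 : w ((u : ↥w.valuationSubring) : R) = 1 := by
    rcases lt_or_eq_of_le hle1 with h | h
    · exfalso
      have hlt : w ((u : ↥w.valuationSubring) : R) * w ((↑u⁻¹ : ↥w.valuationSubring) : R) < 1 := by
        calc w ((u : ↥w.valuationSubring) : R) * w ((↑u⁻¹ : ↥w.valuationSubring) : R)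
            ≤ w ((u : ↥w.valuationSubring) : R) * 1 := by gcongr
          _ = w ((u : ↥w.valuationSubring) : R) := mul_one _
          _ < 1 := h
      rw [hprod] at hlt
      exact lt_irrefl _ hlt
    · exact h
  have hval : w ((algebraMap K R) (a : K)) = 1 := by
    have heq : ((valuationSubringHom v w e hcomp a : ↥w.valuationSubring) : R)
        = algebraMap K R (a : K) := rfl
    rw [hu, heq] at h1
    exact h1
  have hpow : v (a : K) ^ e = 1 := by rw [← hcomp]; exact hval
  have hne : v (a : K) ≠ 0 := by
    intro h0
    rw [h0, zero_pow he.ne'] at hpow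
    exact zero_ne_one hpow
  have hv1 : v (a : K) = 1 := by
    rcases WithZero.ne_zero_iff_exists.mp hne with ⟨m, hm⟩
    rw [← hm] at hpow
    rw [← hm]
    norm_cast at hpow ⊢
    have h2 := congrArg Multiplicative.toAdd hpow
    rw [toAdd_pow] at h2
    simp only [toAdd_one] at h2
    have hm0 : Multiplicative.toAdd m = 0 := by
      rcases smul_eq_zero.mp h2 with h | h
      · exact absurd h he.ne'
      · exact h
    have hm1 : m = 1 := by
      rw [← ofAdd_toAdd m, hm0]
      rfl
    rw [hm1]
  have hane : (a : K) ≠ 0 := by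
    intro h0
    rw [h0, map_zero] at hv1
    exact zero_ne_one hv1
  refine IsUnit.of_mul_eq_one (a := a) ⟨(a : K)⁻¹, ?_⟩ (Subtype.ext ?_)
  · rw [Valuation.mem_valuationSubring_iff, map_inv₀, hv1, inv_one]
  · exact mul_inv_cancel₀ hane

/-- The induced embedding of residue fields. -/
def residueMap (v : Valuation K Zm0) (w : Valuation R Zm0) (e : ℕ) (he : 0 < e)
    (hcomp : ∀ x : K, w (algebraMap K R x) = v x ^ e) :
    ResField K v →+* ResField R w := by
  haveI := isLocalHom_valuationSubringHom v w e he hcomp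
  exact IsLocalRing.ResidueField.map (valuationSubringHom v w e hcomp)

/-- The residue degree `[R̂ : K̂]` of the extension of valued fields. -/
def resDeg (v : Valuation K Zm0) (w : Valuation R Zm0) (e : ℕ) (he : 0 < e)
    (hcomp : ∀ x : K, w (algebraMap K R x) = v x ^ e) : ℕ :=
  letI : Algebra (ResField K v) (ResField R w) := (residueMap v w e he hcomp).toAlgebra
  Module.finrank (ResField K v) (ResField R w)

/-- The residue extension `R̂ / K̂` is abelian. -/
def ResidueAbelian (v : Valuation K Zm0) (w : Valuation R Zm0) (e : ℕ) (he : 0 < e)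
    (hcomp : ∀ x : K, w (algebraMap K R x) = v x ^ e) : Prop :=
  letI : Algebra (ResField K v) (ResField R w) := (residueMap v w e he hcomp).toAlgebra
  IsAbelianExt (ResField K v) (ResField R w)

/-- The residue extension `R̂ / K̂` is separable. -/
def ResidueSeparable (v : Valuation K Zm0) (w : Valuation R Zm0) (e : ℕ) (he : 0 < e)
    (hcomp : ∀ x : K, w (algebraMap K R x) = v x ^ e) : Prop :=
  letI : Algebra (ResField K v) (ResField R w) := (residueMap v w e he hcomp).toAlgebra
  Algebra.IsSeparable (ResField K v) (ResField R w)

/-- `π` is a uniformizer of `(K, v)`: its value generates the whole value group. -/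
def IsUniformizer (v : Valuation K Zm0) (π : K) : Prop :=
  v π ≠ 0 ∧ ∀ γ : Zm0, γ ≠ 0 → ∃ k : ℤ, γ = v π ^ k

/-- `U(K)`: the unit group of the valuation ring, as a subgroup of `Kˣ`. -/
def unitSubgroup (v : Valuation K Zm0) : Subgroup Kˣ where
  carrier := {x : Kˣ | v (x : K) = 1}
  one_mem' := by simp
  mul_mem' := by
    intro a b ha hb
    simp only [Set.mem_setOf_eq, Units.val_mul, map_mul] at *
    rw [ha, hb, one_mul]
  inv_mem' := by
    intro a ha
    simp only [Set.mem_setOf_eq] at *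
    rw [Units.val_inv_eq_inv_val, map_inv₀, ha, inv_one]

/-- `Op(K)`: the set of subgroups of `Kˣ` that are open w.r.t. the valuation topology and of
finite index. -/
def OpSet (K : Type) [Field K] (v : Valuation K Zm0) : Set (Subgroup Kˣ) :=
  letI : Valued K Zm0 := Valued.mk' v
  {U | IsOpen (U : Set Kˣ) ∧ U.index ≠ 0}

/-- `Σ(K)`: the set of subgroups of `Kˣ` of finite index not divisible by the residue
characteristic. -/
def SigmaSet (K : Type) [Field K] (v : Valuation K Zm0) : Set (Subgroup Kˣ) :=
  {U | U.index ≠ 0 ∧ ¬ ringChar (ResField K v) ∣ U.index}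

end


section Aux

/-- Membership in a subgroup from coprime powers. -/
private theorem aux_mem_of_coprime_pows {G : Type*} [Group G] {H : Subgroup G} {u : G}
    {m n : ℕ} (hcop : Nat.Coprime m n) (hm : u ^ m ∈ H) (hn : u ^ n ∈ H) : u ∈ H := by
  obtain ⟨a, b, hab⟩ := (Nat.isCoprime_iff_coprime.mpr hcop)
  have h1 : ((m : ℤ)) * a + ((n : ℤ)) * b = 1 := by linear_combination hab
  have : u = (u ^ m) ^ a * (u ^ n) ^ b := by
    calc u = u ^ (((m : ℤ)) * a + ((n : ℤ)) * b) := by rw [h1, zpow_one]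
    _ = (u ^ (m : ℤ)) ^ a * (u ^ (n : ℤ)) ^ b := by rw [zpow_add, zpow_mul, zpow_mul]
    _ = (u ^ m) ^ a * (u ^ n) ^ b := by rw [zpow_natCast, zpow_natCast]
  rw [this]
  exact mul_mem (H.zpow_mem hm a) (H.zpow_mem hn b)

/-- Subgroups of a group with commutative multiplication are normal. -/
private theorem aux_normal {G : Type*} [Group G] {H : Subgroup G}
    (hc : ∀ a b : G, a * b = b * a) : H.Normal :=
  ⟨fun n hn g => by rw [hc g n, mul_assoc, mul_inv_cancel, mul_one]; exact hn⟩

/-- Norm from `L` to `L2` of an element of `L1` is the image of its norm from `L1` to `E`,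
when `L = L1 L2` and `[L : L2] = [L1 : E]`. -/
private theorem aux_norm_compositum (E L : Type) [Field E] [Field L] [Algebra E L]
    [FiniteDimensional E L] [Algebra.IsSeparable E L]
    (L1 L2 : IntermediateField E L) (hL : L1 ⊔ L2 = ⊤)
    (hdeg : Module.finrank ↥L2 L = Module.finrank E ↥L1) (b : ↥L1) :
    Algebra.norm ↥L2 ((b : L)) = algebraMap E ↥L2 (Algebra.norm E b) := by
  haveI : FiniteDimensional ↥L2 L := FiniteDimensional.right E ↥L2 L
  haveI : Algebra.IsSeparable ↥L2 L := Algebra.isSeparable_tower_top_of_isSeparable E ↥L2 L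
  haveI : Algebra.IsSeparable E ↥L1 := Algebra.isSeparable_tower_bot_of_isSeparable E ↥L1 L
  set Ω := AlgebraicClosure L
  apply (algebraMap ↥L2 Ω).injective
  rw [Algebra.norm_eq_prod_embeddings, ← IsScalarTower.algebraMap_apply E ↥L2 Ω,
    Algebra.norm_eq_prod_embeddings]
  -- restriction map on embeddings
  let r : (L →ₐ[↥L2] Ω) → (↥L1 →ₐ[E] Ω) := fun σ => (σ.restrictScalars E).comp L1.val
  have hinj : Function.Injective r := by
    intro σ σ' h
    let S : Subalgebra E L := AlgHom.equalizer (σ.restrictScalars E) (σ'.restrictScalars E)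
    have h1 : L1.toSubalgebra ≤ S := by
      intro x hx
      exact AlgHom.congr_fun h ⟨x, hx⟩
    have h2 : L2.toSubalgebra ≤ S := by
      intro x hx
      show (σ.restrictScalars E) x = (σ'.restrictScalars E) x
      have e1 := σ.commutes ⟨x, hx⟩
      have e2 := σ'.commutes ⟨x, hx⟩
      show σ x = σ' x
      rw [show x = algebraMap ↥L2 L ⟨x, hx⟩ from
        (IntermediateField.algebraMap_apply L2 ⟨x, hx⟩).symm ▸ rfl, e1, e2]
    have hS : (⊤ : Subalgebra E L) ≤ S := by
      rw [← IntermediateField.top_toSubalgebra (F := E) (E := L), ← hL,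
        IntermediateField.sup_toSubalgebra_of_left]
      exact sup_le h1 h2
    exact AlgHom.ext fun x => hS (Algebra.mem_top)
  have hcard : Fintype.card (L →ₐ[↥L2] Ω) = Fintype.card (↥L1 →ₐ[E] Ω) := by
    rw [AlgHom.card, AlgHom.card, hdeg]
  have hbij : Function.Bijective r :=
    (Fintype.bijective_iff_injective_and_card r).mpr ⟨hinj, hcard⟩
  exact Fintype.prod_bijective r hbij (fun σ => σ (b : L)) (fun τ => τ b) (fun σ => rfl)

end Aux

/-- Lemma 2.1: norm groups of a compositum of extensions of coprime degrees. -/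
theorem stmt10_norm_groups_of_coprime_compositum
    (E L : Type) [Field E] [Field L] [Algebra E L] [FiniteDimensional E L]
    [Algebra.IsSeparable E L]
    (L1 L2 : IntermediateField E L) (hL : L1 ⊔ L2 = ⊤)
    (hcop : Nat.Coprime (Module.finrank E ↥L1) (Module.finrank E ↥L2)) :
    normGroup E L = normGroup E ↥L1 ⊓ normGroup E ↥L2 ∧
    normGroup E ↥L1 = Subgroup.comap (Units.map (algebraMap E ↥L2 : E →* ↥L2))
      (normGroup ↥L2 L) ∧
    Nonempty ((Eˣ ⧸ normGroup E L) ≃*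
      ((Eˣ ⧸ normGroup E ↥L1) × (Eˣ ⧸ normGroup E ↥L2))) := by
  haveI : Algebra.IsSeparable E ↥L1 := Algebra.isSeparable_tower_bot_of_isSeparable E ↥L1 L
  haveI : Algebra.IsSeparable E ↥L2 := Algebra.isSeparable_tower_bot_of_isSeparable E ↥L2 L
  set n1 := Module.finrank E ↥L1 with hn1
  set n2 := Module.finrank E ↥L2 with hn2
  have n1pos : 0 < n1 := Module.finrank_pos
  have n2pos : 0 < n2 := Module.finrank_pos
  -- degree computations
  have hdvd1 : n1 ∣ Module.finrank E L :=
    ⟨Module.finrank ↥L1 L, (Module.finrank_mul_finrank E ↥L1 L).symm⟩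
  have hdvd2 : n2 ∣ Module.finrank E L :=
    ⟨Module.finrank ↥L2 L, (Module.finrank_mul_finrank E ↥L2 L).symm⟩
  have hle : Module.finrank E L ≤ n1 * n2 := by
    have h := IntermediateField.finrank_sup_le (E1 := L1) (E2 := L2)
    rwa [hL, IntermediateField.finrank_top'] at h
  have hd : Module.finrank E L = n1 * n2 :=
    le_antisymm hle (Nat.le_of_dvd Module.finrank_pos
      (Nat.Coprime.mul_dvd_of_dvd_of_dvd hcop hdvd1 hdvd2))
  have hfr1 : Module.finrank ↥L1 L = n2 := by
    have h := Module.finrank_mul_finrank E ↥L1 L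
    rw [hd] at h
    exact Nat.eq_of_mul_eq_mul_left n1pos h
  have hfr2 : Module.finrank ↥L2 L = n1 := by
    have h := Module.finrank_mul_finrank E ↥L2 L
    rw [hd, mul_comm n1 n2] at h
    exact Nat.eq_of_mul_eq_mul_left n2pos h
  -- basic facts about norm groups
  have pow1 : ∀ u : Eˣ, u ^ n1 ∈ normGroup E ↥L1 := by
    intro u
    refine ⟨Units.map (algebraMap E ↥L1 : E →* ↥L1) u, Units.ext ?_⟩
    simp [Algebra.norm_algebraMap, hn1]
  have pow2 : ∀ u : Eˣ, u ^ n2 ∈ normGroup E ↥L2 := by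
    intro u
    refine ⟨Units.map (algebraMap E ↥L2 : E →* ↥L2) u, Units.ext ?_⟩
    simp [Algebra.norm_algebraMap, hn2]
  have subN1 : normGroup E L ≤ normGroup E ↥L1 := by
    rintro _ ⟨x, rfl⟩
    exact ⟨Units.map (Algebra.norm ↥L1 : L →* ↥L1) x, Units.ext (by simp [Algebra.norm_norm])⟩
  have subN2 : normGroup E L ≤ normGroup E ↥L2 := by
    rintro _ ⟨x, rfl⟩
    exact ⟨Units.map (Algebra.norm ↥L2 : L →* ↥L2) x, Units.ext (by simp [Algebra.norm_norm])⟩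
  have memN1 : ∀ u ∈ normGroup E ↥L1, u ^ n2 ∈ normGroup E L := by
    rintro _ ⟨b, rfl⟩
    refine ⟨Units.map (algebraMap ↥L1 L : ↥L1 →* L) b, Units.ext ?_⟩
    show Algebra.norm E ((algebraMap ↥L1 L) (b : ↥L1)) = _
    rw [← Algebra.norm_norm (R := E) (S := ↥L1) (a := (algebraMap ↥L1 L) (b : ↥L1)),
      Algebra.norm_algebraMap, map_pow, hfr1]
    simp
  have memN2 : ∀ u ∈ normGroup E ↥L2, u ^ n1 ∈ normGroup E L := by
    rintro _ ⟨b, rfl⟩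
    refine ⟨Units.map (algebraMap ↥L2 L : ↥L2 →* L) b, Units.ext ?_⟩
    show Algebra.norm E ((algebraMap ↥L2 L) (b : ↥L2)) = _
    rw [← Algebra.norm_norm (R := E) (S := ↥L2) (a := (algebraMap ↥L2 L) (b : ↥L2)),
      Algebra.norm_algebraMap, map_pow, hfr2]
    simp
  -- Part 1
  have part1 : normGroup E L = normGroup E ↥L1 ⊓ normGroup E ↥L2 := by
    refine le_antisymm (le_inf subN1 subN2) ?_
    rintro u ⟨h1, h2⟩
    exact aux_mem_of_coprime_pows hcop (memN2 u h2) (memN1 u h1)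
  -- Part 2
  have part2 : normGroup E ↥L1 = Subgroup.comap (Units.map (algebraMap E ↥L2 : E →* ↥L2))
      (normGroup ↥L2 L) := by
    ext u
    rw [Subgroup.mem_comap]
    constructor
    · rintro ⟨b, rfl⟩
      refine ⟨Units.map (algebraMap ↥L1 L : ↥L1 →* L) b, Units.ext ?_⟩
      show Algebra.norm ↥L2 ((algebraMap ↥L1 L) (b : ↥L1)) = _
      have key := aux_norm_compositum E L L1 L2 hL hfr2 (b : ↥L1)
      simpa using key
    · rintro ⟨x, hx⟩
      have hval : Algebra.norm ↥L2 ((x : Lˣ) : L) = algebraMap E ↥L2 (u : E) := by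
        have := congrArg Units.val hx
        simpa using this
      have hn2mem : u ^ n2 ∈ normGroup E L := by
        refine ⟨x, Units.ext ?_⟩
        show Algebra.norm E ((x : Lˣ) : L) = _
        rw [← Algebra.norm_norm (R := E) (S := ↥L2) (a := ((x : Lˣ) : L)), hval,
          Algebra.norm_algebraMap]
        simp [hn2]
      exact aux_mem_of_coprime_pows hcop (pow1 u) (subN1 hn2mem)
  refine ⟨part1, part2, ?_⟩
  haveI hnorm0 : (normGroup E L).Normal := aux_normal mul_comm
  haveI hnorm1 : (normGroup E ↥L1).Normal := aux_normal mul_comm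
  haveI hnorm2 : (normGroup E ↥L2).Normal := aux_normal mul_comm
  -- Part 3
  set f : Eˣ →* (Eˣ ⧸ normGroup E ↥L1) × (Eˣ ⧸ normGroup E ↥L2) :=
    (QuotientGroup.mk' (normGroup E ↥L1)).prod (QuotientGroup.mk' (normGroup E ↥L2)) with hf
  have hker : f.ker = normGroup E L := by
    rw [hf, MonoidHom.ker_prod, QuotientGroup.ker_mk', QuotientGroup.ker_mk', ← part1]
  have hsurj : Function.Surjective f := by
    rintro ⟨qx, qy⟩
    obtain ⟨x, rfl⟩ := QuotientGroup.mk'_surjective (normGroup E ↥L1) qx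
    obtain ⟨y, rfl⟩ := QuotientGroup.mk'_surjective (normGroup E ↥L2) qy
    obtain ⟨a, b, hab⟩ := Nat.isCoprime_iff_coprime.mpr hcop
    refine ⟨x ^ ((n2 : ℤ) * b) * y ^ ((n1 : ℤ) * a), Prod.ext ?_ ?_⟩
    · show (QuotientGroup.mk (x ^ ((n2 : ℤ) * b) * y ^ ((n1 : ℤ) * a)) :
        Eˣ ⧸ normGroup E ↥L1) = QuotientGroup.mk x
      rw [QuotientGroup.eq]
      have e1 : (n2 : ℤ) * b = 1 - (n1 : ℤ) * a := by linear_combination hab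
      have heq : (x ^ ((n2 : ℤ) * b) * y ^ ((n1 : ℤ) * a))⁻¹ * x
          = x ^ ((n1 : ℤ) * a) * y ^ (-((n1 : ℤ) * a)) := by
        rw [e1]
        have h' : (x ^ ((1 : ℤ) - (n1 : ℤ) * a) * y ^ ((n1 : ℤ) * a))⁻¹ * x
            = y ^ (-((n1 : ℤ) * a)) * x ^ ((n1 : ℤ) * a) := by group
        rw [h', mul_comm]
      rw [heq]
      have hx1 : x ^ ((n1 : ℤ)) ∈ normGroup E ↥L1 := by rw [zpow_natCast]; exact pow1 x
      have hy1 : y ^ ((n1 : ℤ)) ∈ normGroup E ↥L1 := by rw [zpow_natCast]; exact pow1 y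
      refine mul_mem ?_ ?_
      · rw [zpow_mul]; exact Subgroup.zpow_mem _ hx1 a
      · rw [← mul_neg, zpow_mul]; exact Subgroup.zpow_mem _ hy1 (-a)
    · show (QuotientGroup.mk (x ^ ((n2 : ℤ) * b) * y ^ ((n1 : ℤ) * a)) :
        Eˣ ⧸ normGroup E ↥L2) = QuotientGroup.mk y
      rw [QuotientGroup.eq]
      have e1 : (n1 : ℤ) * a = 1 - (n2 : ℤ) * b := by linear_combination hab
      have heq : (x ^ ((n2 : ℤ) * b) * y ^ ((n1 : ℤ) * a))⁻¹ * y
          = x ^ (-((n2 : ℤ) * b)) * y ^ ((n2 : ℤ) * b) := by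
        rw [mul_comm (x ^ ((n2 : ℤ) * b)) (y ^ ((n1 : ℤ) * a)), e1]
        group
      rw [heq]
      have hx1 : x ^ ((n2 : ℤ)) ∈ normGroup E ↥L2 := by rw [zpow_natCast]; exact pow2 x
      have hy1 : y ^ ((n2 : ℤ)) ∈ normGroup E ↥L2 := by rw [zpow_natCast]; exact pow2 y
      refine mul_mem ?_ ?_
      · rw [← mul_neg, zpow_mul]; exact Subgroup.zpow_mem _ hx1 (-b)
      · rw [zpow_mul]; exact Subgroup.zpow_mem _ hy1 b
  exact ⟨(QuotientGroup.quotientMulEquivOfEq hker.symm).trans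
    (QuotientGroup.quotientKerEquivOfSurjective f hsurj)⟩
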